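/- Let a ≥ 2 and r ≥ 1 be integers, let j_0 > j_1 > ⋯ > j_r ≥ 0 be a strictly decreasing sequence of nonnegative integers, and let δ_{j_i} ∈ {1, 2, …, a−1} for i = 0, 1, …, r. Set n_J = δ_{j_0}·a^{j_0} − Σ_{i=1}^{r} δ_{j_i}·a^{j_i}. Then M_A(n_J) ≤ r, and n_J has an a-adic representation of the form n_J = (δ_{j_0} − 1)·a^{j_0} + Σ_{i=j_r+1}^{j_0−1} δ'_i·a^i + δ'_{j_r}·a^{j_r}, where δ'_i ∈ {0, 1, …, a−1} for j_r ≤ i ≤ j_0 − 1 and δ'_{j_r} ≠ 0; in particular every base-a digit of n_J at positions below j_r and above j_0 is zero, and the digit at position j_r is nonzero. -/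

import Mathlib

/-- The `i`-th digit of `n` in base `a`. -/
def digit (a n i : ℕ) : ℕ := n / a ^ i % a

/-- `blockCount a n` is the number of maximal `a`-adic blocks of nonzero digits in the
base-`a` representation of `n`, counted via the top ends of the blocks. -/
noncomputable def blockCount (a n : ℕ) : ℕ :=
  {i : ℕ | digit a n i ≠ 0 ∧ digit a n (i + 1) = 0}.ncard

private lemma jAnti {r : ℕ} {j : ℕ → ℕ} (hj : ∀ i, i < r → j (i + 1) < j i) :
    ∀ i2, i2 ≤ r → ∀ i1, i1 < i2 → j i2 < j i1 := by
  intro i2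
  induction i2 with
  | zero => omega
  | succ m ih =>
    intro hle i1 h
    have h1 : j (m + 1) < j m := hj m (by omega)
    rcases Nat.lt_or_ge i1 m with h2 | h2
    · exact h1.trans (ih (by omega) i1 h2)
    · have he : i1 = m := by omega
      subst he; exact h1

private lemma digit_zero_of_dvd {a N p : ℕ} (h : a ^ (p + 1) ∣ N) : digit a N p = 0 := by
  obtain ⟨m, rfl⟩ := h
  rcases Nat.eq_zero_or_pos a with rfl | ha
  · simp [digit]
  · unfold digit
    rw [pow_succ, mul_assoc, Nat.mul_div_cancel_left _ (pow_pos ha p)]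
    simp [Nat.mul_mod_left, Nat.mul_mod_right]

private lemma div_mod_of_eq {a : ℕ} (ha : 0 < a) {N A t p : ℕ} (h : N + t = A * a ^ p)
    (ht : t < a ^ p) (htpos : 0 < t) :
    N / a ^ p = A - 1 ∧ N % a ^ p = a ^ p - t := by
  have hP : 0 < a ^ p := pow_pos ha p
  have hA : 1 ≤ A := by
    by_contra hc
    have hz : A = 0 := by omega
    subst hz; simp at h; omega
  obtain ⟨B, rfl⟩ : ∃ B, A = B + 1 := ⟨A - 1, by omega⟩
  have hmul : (B + 1) * a ^ p = B * a ^ p + a ^ p := by ring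
  have hcomm : B * a ^ p = a ^ p * B := by ring
  have hN : N = a ^ p * B + (a ^ p - t) := by omega
  constructor
  · rw [hN, Nat.mul_add_div hP, Nat.div_eq_of_lt (by omega)]
    omega
  · rw [hN, Nat.mul_add_mod, Nat.mod_eq_of_lt (by omega)]

private lemma mod_of_add_mul {A d a C : ℕ} (hd1 : 1 ≤ d) (hd2 : d ≤ a - 1)
    (h : A + d = a * C) : A % a = a - d := by
  rcases C with _ | C
  · omega
  · have h2 : a * (C + 1) = a * C + a := by ring
    have hA : A = a - d + a * C := by omega
    rw [hA, Nat.add_mul_mod_self_left, Nat.mod_eq_of_lt (by omega)]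

private lemma mod_pow_sum {a : ℕ} (ha : 2 ≤ a) (N : ℕ) :
    ∀ K, N % a ^ K = ∑ i ∈ Finset.range K, digit a N i * a ^ i := by
  intro K
  induction K with
  | zero => simp [Nat.mod_one]
  | succ K ih =>
    rw [Finset.sum_range_succ, ← ih]
    have ha0 : 0 < a := by omega
    have hP : 0 < a ^ K := pow_pos ha0 K
    have hd : digit a N K < a := Nat.mod_lt _ ha0
    have hm : N % a ^ K < a ^ K := Nat.mod_lt _ hP
    have h1 : N / a ^ K = a * (N / a ^ (K + 1)) + digit a N K := by
      unfold digit
      rw [pow_succ, ← Nat.div_div_eq_div_mul]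
      exact (Nat.div_add_mod (N / a ^ K) a).symm
    have h3 := Nat.div_add_mod N (a ^ K)
    rw [h1] at h3
    have h4 : a ^ K * (a * (N / a ^ (K + 1)) + digit a N K)
        = a ^ (K + 1) * (N / a ^ (K + 1)) + digit a N K * a ^ K := by ring
    have h2 : N = N % a ^ K + digit a N K * a ^ K + a ^ (K + 1) * (N / a ^ (K + 1)) := by
      omega
    have hlt : N % a ^ K + digit a N K * a ^ K < a ^ (K + 1) := by
      have h5 : (digit a N K + 1) * a ^ K ≤ a * a ^ K :=
        Nat.mul_le_mul_right _ (by omega)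
      have h6 : (digit a N K + 1) * a ^ K = digit a N K * a ^ K + a ^ K := by ring
      have h7 : a * a ^ K = a ^ (K + 1) := by ring
      omega
    conv_lhs => rw [h2]
    rw [Nat.add_mul_mod_self_left, Nat.mod_eq_of_lt hlt]

private def Tsum (a r : ℕ) (j δ : ℕ → ℕ) (k : ℕ) : ℤ :=
  ∑ i ∈ Finset.Ioc k r, (δ i : ℤ) * (a : ℤ) ^ j i

private def Aint (a : ℕ) (j δ : ℕ → ℕ) (p k : ℕ) : ℤ :=
  (δ 0 : ℤ) * (a : ℤ) ^ (j 0 - p) - ∑ i ∈ Finset.Ioc 0 k, (δ i : ℤ) * (a : ℤ) ^ (j i - p)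

private lemma master (a r : ℕ) (ha : 2 ≤ a) (hr : 1 ≤ r)
    (j : ℕ → ℕ) (hj : ∀ i, i < r → j (i + 1) < j i)
    (δ : ℕ → ℕ) (hδ : ∀ i, i ≤ r → 1 ≤ δ i ∧ δ i ≤ a - 1) :
    ∃ N : ℕ,
      (N : ℤ) = (δ 0 : ℤ) * (a : ℤ) ^ j 0 -
          ∑ i ∈ Finset.Icc 1 r, (δ i : ℤ) * (a : ℤ) ^ j i ∧
      (∀ p, p < j r → digit a N p = 0) ∧
      digit a N (j r) = a - δ r ∧
      (∀ p, j r < p → p < j 0 → (∀ k, k ≤ r → p ≠ j k) → digit a N p = a - 1) ∧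
      (∀ p, j 0 < p → digit a N p = 0) ∧
      N / a ^ j 0 = δ 0 - 1 := by
  have ha0 : 0 < a := by omega
  have hanti := jAnti hj
  have hIcc : Finset.Icc 1 r = Finset.Ioc 0 r := Finset.Icc_add_one_left_eq_Ioc 0 r
  have hTnn : ∀ k, 0 ≤ Tsum a r j δ k := by
    intro k
    apply Finset.sum_nonneg
    intro i _
    positivity
  have hTpos : ∀ k, k < r → 0 < Tsum a r j δ k := by
    intro k hk
    have hmem : r ∈ Finset.Ioc k r := by simp [Finset.mem_Ioc]; omega
    have hterm : (0 : ℤ) < (δ r : ℤ) * (a : ℤ) ^ j r := by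
      have h1 : 1 ≤ δ r := (hδ r le_rfl).1
      have h2 : (1 : ℤ) ≤ (δ r : ℤ) := by exact_mod_cast h1
      have h3 : (0 : ℤ) < (a : ℤ) ^ j r := by positivity
      nlinarith
    calc (0 : ℤ) < (δ r : ℤ) * (a : ℤ) ^ j r := hterm
      _ ≤ Tsum a r j δ k := by
          apply Finset.single_le_sum (f := fun i => (δ i : ℤ) * (a : ℤ) ^ j i)
          · intro i _; positivity
          · exact hmem
  have hTlt : ∀ k, k < r → Tsum a r j δ k < (a : ℤ) ^ (j (k + 1) + 1) := by
    intro k hk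
    have hstep1 : Tsum a r j δ k ≤ ∑ i ∈ Finset.Ioc k r, ((a : ℤ) - 1) * (a : ℤ) ^ j i := by
      apply Finset.sum_le_sum
      intro i hi
      have hmem := Finset.mem_Ioc.1 hi
      have hd := (hδ i hmem.2).2
      have hcast : (δ i : ℤ) ≤ (a : ℤ) - 1 := by omega
      exact mul_le_mul_of_nonneg_right hcast (by positivity)
    have hinj : ∀ x ∈ Finset.Ioc k r, ∀ y ∈ Finset.Ioc k r, j x = j y → x = y := by
      intro x hx y hy hxy
      by_contra hne
      rcases Nat.lt_or_ge x y with h | h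
      · have := hanti y (Finset.mem_Ioc.1 hy).2 x h; omega
      · have hlt : y < x := by omega
        have := hanti x (Finset.mem_Ioc.1 hx).2 y hlt; omega
    have hstep2 : ∑ i ∈ Finset.Ioc k r, ((a : ℤ) - 1) * (a : ℤ) ^ j i
        = ∑ m ∈ (Finset.Ioc k r).image j, ((a : ℤ) - 1) * (a : ℤ) ^ m :=
      (Finset.sum_image (f := fun m => ((a : ℤ) - 1) * (a : ℤ) ^ m) (g := j) hinj).symm
    have hsub : (Finset.Ioc k r).image j ⊆ Finset.range (j (k + 1) + 1) := by
      intro m hm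
      obtain ⟨i, hi, rfl⟩ := Finset.mem_image.1 hm
      have hi' := Finset.mem_Ioc.1 hi
      have hle : j i ≤ j (k + 1) := by
        rcases Nat.eq_or_lt_of_le (show k + 1 ≤ i from hi'.1) with he | hlt2
        · rw [← he]
        · exact le_of_lt (hanti i hi'.2 (k + 1) hlt2)
      simp only [Finset.mem_range]; omega
    have hstep3 : ∑ m ∈ (Finset.Ioc k r).image j, ((a : ℤ) - 1) * (a : ℤ) ^ m
        ≤ ∑ m ∈ Finset.range (j (k + 1) + 1), ((a : ℤ) - 1) * (a : ℤ) ^ m :=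
      Finset.sum_le_sum_of_subset_of_nonneg hsub (by
        intro i _ _
        have h1 : (1 : ℤ) ≤ (a : ℤ) := by omega
        have h2 : (0 : ℤ) ≤ (a : ℤ) ^ i := by positivity
        nlinarith)
    have hgeom : ∑ m ∈ Finset.range (j (k + 1) + 1), ((a : ℤ) - 1) * (a : ℤ) ^ m
        = (a : ℤ) ^ (j (k + 1) + 1) - 1 := by
      calc ∑ m ∈ Finset.range (j (k + 1) + 1), ((a : ℤ) - 1) * (a : ℤ) ^ m
          = ∑ m ∈ Finset.range (j (k + 1) + 1), (a : ℤ) ^ m * ((a : ℤ) - 1) := by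
            apply Finset.sum_congr rfl; intro m _; ring
        _ = (∑ m ∈ Finset.range (j (k + 1) + 1), (a : ℤ) ^ m) * ((a : ℤ) - 1) :=
            (Finset.sum_mul _ _ _).symm
        _ = (a : ℤ) ^ (j (k + 1) + 1) - 1 := geom_sum_mul _ _
    have : Tsum a r j δ k ≤ (a : ℤ) ^ (j (k + 1) + 1) - 1 := by
      rw [hstep2] at hstep1
      calc Tsum a r j δ k ≤ _ := hstep1
        _ ≤ _ := hstep3
        _ = _ := hgeom
    omega
  have hj10 : j 1 < j 0 := hj 0 (by omega)
  have hT0lt : Tsum a r j δ 0 < (a : ℤ) ^ j 0 := by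
    calc Tsum a r j δ 0 < (a : ℤ) ^ (j 1 + 1) := hTlt 0 hr
      _ ≤ (a : ℤ) ^ j 0 := pow_le_pow_right₀ (by omega) (by omega)
  have hn0 : 0 ≤ (δ 0 : ℤ) * (a : ℤ) ^ j 0 - Tsum a r j δ 0 := by
    have h1 : (1 : ℤ) ≤ (δ 0 : ℤ) := by
      have := (hδ 0 (by omega)).1; omega
    have h2 : (0 : ℤ) ≤ (a : ℤ) ^ j 0 := by positivity
    nlinarith
  obtain ⟨N, hN⟩ : ∃ N : ℕ, (N : ℤ) = (δ 0 : ℤ) * (a : ℤ) ^ j 0 - Tsum a r j δ 0 :=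
    ⟨((δ 0 : ℤ) * (a : ℤ) ^ j 0 - Tsum a r j δ 0).toNat, Int.toNat_of_nonneg hn0⟩
  have hkey : ∀ p k, k ≤ r → (∀ i, i ≤ k → p ≤ j i) →
      Aint a j δ p k * (a : ℤ) ^ p = (N : ℤ) + Tsum a r j δ k := by
    intro p k hkr hpk
    have hsplit : Tsum a r j δ 0
        = (∑ i ∈ Finset.Ioc 0 k, (δ i : ℤ) * (a : ℤ) ^ j i) + Tsum a r j δ k :=
      (Finset.sum_Ioc_consecutive _ (Nat.zero_le k) hkr).symm
    have hpow0 : (a : ℤ) ^ (j 0 - p) * (a : ℤ) ^ p = (a : ℤ) ^ j 0 := by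
      rw [← pow_add, Nat.sub_add_cancel (hpk 0 (Nat.zero_le k))]
    have hpows : ∀ i ∈ Finset.Ioc 0 k,
        (δ i : ℤ) * (a : ℤ) ^ (j i - p) * (a : ℤ) ^ p = (δ i : ℤ) * (a : ℤ) ^ j i := by
      intro i hi
      have hi' := Finset.mem_Ioc.1 hi
      rw [mul_assoc, ← pow_add, Nat.sub_add_cancel (hpk i hi'.2)]
    rw [hN, Aint, sub_mul, Finset.sum_mul, mul_assoc, hpow0,
      Finset.sum_congr rfl hpows, hsplit]
    ring
  have hnat : ∀ p k, k ≤ r → (∀ i, i ≤ k → p ≤ j i) →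
      ∃ A : ℕ, (A : ℤ) = Aint a j δ p k ∧ N + (Tsum a r j δ k).toNat = A * a ^ p := by
    intro p k hkr hpk
    have hk := hkey p k hkr hpk
    have hAnn : 0 ≤ Aint a j δ p k := by
      by_contra hc
      push_neg at hc
      have hx : Aint a j δ p k * (a : ℤ) ^ p < 0 :=
        mul_neg_of_neg_of_pos hc (by positivity)
      rw [hk] at hx
      have h1 := hTnn k
      have h2 : (0 : ℤ) ≤ (N : ℤ) := by positivity
      linarith
    refine ⟨(Aint a j δ p k).toNat, Int.toNat_of_nonneg hAnn, ?_⟩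
    have hcast : ((N + (Tsum a r j δ k).toNat : ℕ) : ℤ)
        = (((Aint a j δ p k).toNat * a ^ p : ℕ) : ℤ) := by
      push_cast [Int.toNat_of_nonneg hAnn, Int.toNat_of_nonneg (hTnn k)]
      linarith [hk]
    exact_mod_cast hcast
  -- package at p = j r, k = r
  have hprle : ∀ i, i ≤ r → j r ≤ j i := by
    intro i hi
    rcases Nat.eq_or_lt_of_le hi with rfl | hlt
    · exact le_rfl
    · exact le_of_lt (hanti r le_rfl i hlt)
  obtain ⟨Ar, hAr, hArEq⟩ := hnat (j r) r le_rfl hprle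
  have hTr : Tsum a r j δ r = 0 := by simp [Tsum]
  rw [hTr] at hArEq
  simp only [Int.toNat_zero, add_zero] at hArEq
  have hdvdN : a ^ j r ∣ N := ⟨Ar, by rw [hArEq]; ring⟩
  -- claim 1 : digits below j r vanish
  have hlow : ∀ p, p < j r → digit a N p = 0 := by
    intro p hp
    exact digit_zero_of_dvd (dvd_trans (pow_dvd_pow a (by omega)) hdvdN)
  -- claim 2 : digit at j r
  have hjr : digit a N (j r) = a - δ r := by
    have hdiv : N / a ^ j r = Ar := by
      rw [hArEq]; exact Nat.mul_div_cancel _ (pow_pos ha0 (j r))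
    have hdig : digit a N (j r) = Ar % a := by unfold digit; rw [hdiv]
    obtain ⟨r', rfl⟩ : ∃ r', r = r' + 1 := ⟨r - 1, by omega⟩
    have hsum : ∑ i ∈ Finset.Ioc 0 (r' + 1), (δ i : ℤ) * (a : ℤ) ^ (j i - j (r' + 1))
        = (∑ i ∈ Finset.Ioc 0 r', (δ i : ℤ) * (a : ℤ) ^ (j i - j (r' + 1))) + (δ (r' + 1) : ℤ) := by
      rw [← Finset.sum_Ioc_consecutive _ (Nat.zero_le r') (Nat.le_succ r'),
        Nat.Ioc_succ_singleton, Finset.sum_singleton, Nat.sub_self, pow_zero, mul_one]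
    have hdvd : (a : ℤ) ∣ Aint a j δ (j (r' + 1)) (r' + 1) + (δ (r' + 1) : ℤ) := by
      rw [Aint, hsum]
      have heq : (δ 0 : ℤ) * (a : ℤ) ^ (j 0 - j (r' + 1)) -
          ((∑ i ∈ Finset.Ioc 0 r', (δ i : ℤ) * (a : ℤ) ^ (j i - j (r' + 1))) + (δ (r' + 1) : ℤ))
          + (δ (r' + 1) : ℤ)
          = (δ 0 : ℤ) * (a : ℤ) ^ (j 0 - j (r' + 1)) -
            ∑ i ∈ Finset.Ioc 0 r', (δ i : ℤ) * (a : ℤ) ^ (j i - j (r' + 1)) := by ring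
      rw [heq]
      apply dvd_sub
      · apply dvd_mul_of_dvd_right
        apply dvd_pow_self
        have := hanti (r' + 1) le_rfl 0 (by omega)
        omega
      · apply Finset.dvd_sum
        intro i hi
        have hi' := Finset.mem_Ioc.1 hi
        apply dvd_mul_of_dvd_right
        apply dvd_pow_self
        have := hanti (r' + 1) le_rfl i (by omega)
        omega
    obtain ⟨c, hc⟩ := hdvd
    have hcnn : 0 ≤ c := by
      have h1 : 0 ≤ (Ar : ℤ) + (δ (r' + 1) : ℤ) := by positivity
      rw [hAr] at h1
      rw [hc] at h1
      nlinarith [h1, show (0:ℤ) < (a:ℤ) by exact_mod_cast ha0]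
    have hnateq : Ar + δ (r' + 1) = a * c.toNat := by
      have : ((Ar + δ (r' + 1) : ℕ) : ℤ) = ((a * c.toNat : ℕ) : ℤ) := by
        push_cast [Int.toNat_of_nonneg hcnn]
        rw [hAr, ← hc]
      exact_mod_cast this
    rw [hdig]
    exact mod_of_add_mul (hδ (r' + 1) le_rfl).1 (hδ (r' + 1) le_rfl).2 hnateq
  -- claim 3 : generic positions
  have hmid : ∀ p, j r < p → p < j 0 → (∀ k, k ≤ r → p ≠ j k) → digit a N p = a - 1 := by
    intro p hp1 hp2 hpne
    have hex : ∃ k, j k < p := ⟨r, hp1⟩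
    have hk0r : Nat.find hex ≤ r := Nat.find_min' hex hp1
    have hk0pos : 1 ≤ Nat.find hex := by
      by_contra h
      push_neg at h
      have hz : Nat.find hex = 0 := by omega
      have := Nat.find_spec hex
      rw [hz] at this
      omega
    obtain ⟨k, hk⟩ : ∃ k, Nat.find hex = k + 1 := ⟨Nat.find hex - 1, by omega⟩
    have hkr : k < r := by omega
    have hple : ∀ i, i ≤ k → p ≤ j i := fun i hi =>
      le_of_not_gt (Nat.find_min hex (by omega))
    have hplt : ∀ i, i ≤ k → p < j i := fun i hi =>
      lt_of_le_of_ne (hple i hi) (hpne i (by omega))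
    obtain ⟨A, hA, hAEq⟩ := hnat p k (by omega) hple
    have ht1 : 0 < Tsum a r j δ k := hTpos k hkr
    have hjk1 : j (k + 1) < p := by
      have := Nat.find_spec hex
      rw [hk] at this
      exact this
    have ht2 : Tsum a r j δ k < (a : ℤ) ^ p :=
      lt_of_lt_of_le (hTlt k hkr) (pow_le_pow_right₀ (by omega) (by omega))
    have hcastp : (((a : ℕ) ^ p : ℕ) : ℤ) = (a : ℤ) ^ p := by push_cast; ring
    have htn1 : 0 < (Tsum a r j δ k).toNat := by omega
    have htn2 : (Tsum a r j δ k).toNat < a ^ p := by omega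
    have hdiv := div_mod_of_eq ha0 hAEq htn2 htn1
    have hdig : digit a N p = (A - 1) % a := by unfold digit; rw [hdiv.1]
    have hdvd : (a : ℤ) ∣ (A : ℤ) := by
      rw [hA, Aint]
      apply dvd_sub
      · apply dvd_mul_of_dvd_right
        apply dvd_pow_self
        omega
      · apply Finset.dvd_sum
        intro i hi
        have hi' := Finset.mem_Ioc.1 hi
        apply dvd_mul_of_dvd_right
        apply dvd_pow_self
        have := hplt i hi'.2
        omega
    have hdvdn : a ∣ A := by exact_mod_cast hdvd
    have hA1 : 1 ≤ A := by
      by_contra h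
      have hz : A = 0 := by omega
      rw [hz] at hAEq
      simp at hAEq
      omega
    obtain ⟨C, hC⟩ := hdvdn
    rw [hdig]
    exact mod_of_add_mul le_rfl (by omega) (show A - 1 + 1 = a * C by omega)
  -- claim 4 : digits above j 0 vanish
  have hNlt : N < a ^ (j 0 + 1) := by
    have h1 : (N : ℤ) < (a : ℤ) ^ (j 0 + 1) := by
      rw [hN]
      have h2 : (δ 0 : ℤ) ≤ (a : ℤ) - 1 := by
        have := (hδ 0 (by omega)).2; omega
      have h3 := hTnn 0
      have h4 : (0 : ℤ) < (a : ℤ) ^ j 0 := by positivity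
      have h5 : (a : ℤ) ^ (j 0 + 1) = (a : ℤ) * (a : ℤ) ^ j 0 := by ring
      nlinarith
    have hcastp : (((a : ℕ) ^ (j 0 + 1) : ℕ) : ℤ) = (a : ℤ) ^ (j 0 + 1) := by push_cast; ring
    omega
  have hhigh : ∀ p, j 0 < p → digit a N p = 0 := by
    intro p hp
    unfold digit
    rw [Nat.div_eq_of_lt (lt_of_lt_of_le hNlt (Nat.pow_le_pow_right ha0 (by omega)))]
    simp
  -- claim 5 : quotient at j 0
  have hdivj0 : N / a ^ j 0 = δ 0 - 1 := by
    obtain ⟨A0, hA0, hA0Eq⟩ := hnat (j 0) 0 (by omega)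
      (fun i hi => by obtain rfl : i = 0 := Nat.le_zero.mp hi; exact le_rfl)
    have hA0v : (A0 : ℤ) = (δ 0 : ℤ) := by
      rw [hA0, Aint]
      simp
    have hA0n : A0 = δ 0 := by exact_mod_cast hA0v
    have ht1 : 0 < Tsum a r j δ 0 := hTpos 0 hr
    have hcastp : (((a : ℕ) ^ j 0 : ℕ) : ℤ) = (a : ℤ) ^ j 0 := by push_cast; ring
    have htn1 : 0 < (Tsum a r j δ 0).toNat := by omega
    have htn2 : (Tsum a r j δ 0).toNat < a ^ j 0 := by omega
    have hdiv := div_mod_of_eq ha0 hA0Eq htn2 htn1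
    rw [hdiv.1, hA0n]
  refine ⟨N, ?_, hlow, hjr, hmid, hhigh, hdivj0⟩
  rw [hN, hIcc]
  rfl

theorem stmt_5 (a r : ℕ) (ha : 2 ≤ a) (hr : 1 ≤ r)
    (j : ℕ → ℕ) (hj : ∀ i, i < r → j (i + 1) < j i)
    (δ : ℕ → ℕ) (hδ : ∀ i, i ≤ r → 1 ≤ δ i ∧ δ i ≤ a - 1) :
    ∃ N : ℕ,
      (N : ℤ) = (δ 0 : ℤ) * (a : ℤ) ^ j 0 -
          ∑ i ∈ Finset.Icc 1 r, (δ i : ℤ) * (a : ℤ) ^ j i ∧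
      blockCount a N ≤ r ∧
      ∃ δ' : ℕ → ℕ,
        (∀ i ∈ Finset.Ico (j r) (j 0), δ' i ≤ a - 1) ∧
        δ' (j r) ≠ 0 ∧
        N = (δ 0 - 1) * a ^ j 0 + ∑ i ∈ Finset.Ico (j r) (j 0), δ' i * a ^ i := by
  obtain ⟨N, hNval, hlow, hjr, hmid, hhigh, hdivj0⟩ := master a r ha hr j hj δ hδ
  have ha0 : 0 < a := by omega
  have hanti := jAnti hj
  have hjr0 : j r < j 0 := hanti r le_rfl 0 (by omega)
  have hjrne : digit a N (j r) ≠ 0 := by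
    rw [hjr]
    have := (hδ r le_rfl)
    omega
  refine ⟨N, hNval, ?_, ?_⟩
  · -- blockCount bound
    have key : ∀ i, digit a N i ≠ 0 → digit a N (i + 1) = 0 →
        i = j 0 ∨ ∃ k, k < r ∧ i + 1 = j k := by
      intro i h1 h2
      have hige : j r ≤ i := by
        by_contra h
        push_neg at h
        exact h1 (hlow i h)
      rcases Nat.lt_or_ge (j 0) (i + 1) with hgt | hle
      · left
        by_contra hne
        exact h1 (hhigh i (by omega))
      · right
        have hgtr : j r < i + 1 := by omega
        by_contra hno
        push_neg at hno
        rcases Nat.eq_or_lt_of_le hle with he | hlt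
        · exact hno 0 (by omega) he
        · by_cases hcase : ∀ k, k ≤ r → i + 1 ≠ j k
          · have := hmid (i + 1) hgtr hlt hcase
            rw [h2] at this
            omega
          · push_neg at hcase
            obtain ⟨k, hkr, hjk⟩ := hcase
            have hkner : i + 1 ≠ j r := by
              intro he2
              rw [he2] at h2
              exact hjrne h2
            have hklt : k < r := by
              rcases Nat.eq_or_lt_of_le hkr with rfl | h
              · exact absurd hjk hkner
              · exact h
            exact hno k hklt hjk
    unfold blockCount
    by_cases h0 : digit a N (j 0) = 0
    · have hsub : {i : ℕ | digit a N i ≠ 0 ∧ digit a N (i + 1) = 0}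
          ⊆ ↑((Finset.range r).image (fun k => j k - 1)) := by
        intro i hi
        obtain ⟨h1, h2⟩ := hi
        rcases key i h1 h2 with he | ⟨k, hk, he⟩
        · exact absurd (he ▸ h0) h1
        · simp only [Finset.coe_image, Set.mem_image, Finset.mem_coe, Finset.mem_range]
          exact ⟨k, by simpa using hk, by omega⟩
      calc {i : ℕ | digit a N i ≠ 0 ∧ digit a N (i + 1) = 0}.ncard
          ≤ (↑((Finset.range r).image (fun k => j k - 1)) : Set ℕ).ncard :=
            Set.ncard_le_ncard hsub (Finset.finite_toSet _)
        _ = ((Finset.range r).image (fun k => j k - 1)).card := Set.ncard_coe_finset _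
        _ ≤ (Finset.range r).card := Finset.card_image_le
        _ = r := Finset.card_range r
    · have hsub : {i : ℕ | digit a N i ≠ 0 ∧ digit a N (i + 1) = 0}
          ⊆ ↑(insert (j 0) ((Finset.Ico 1 r).image (fun k => j k - 1))) := by
        intro i hi
        obtain ⟨h1, h2⟩ := hi
        rcases key i h1 h2 with he | ⟨k, hk, he⟩
        · simp [he]
        · have hk1 : 1 ≤ k := by
            by_contra h
            push_neg at h
            have hz : k = 0 := by omega
            rw [hz] at he
            rw [he] at h2
            exact h0 h2
          simp only [Finset.coe_insert, Set.mem_insert_iff, Finset.coe_image,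
            Set.mem_image, Finset.mem_coe, Finset.mem_Ico]
          right
          exact ⟨k, ⟨hk1, hk⟩, by omega⟩
      calc {i : ℕ | digit a N i ≠ 0 ∧ digit a N (i + 1) = 0}.ncard
          ≤ (↑(insert (j 0) ((Finset.Ico 1 r).image (fun k => j k - 1))) : Set ℕ).ncard :=
            Set.ncard_le_ncard hsub (Finset.finite_toSet _)
        _ = (insert (j 0) ((Finset.Ico 1 r).image (fun k => j k - 1))).card :=
            Set.ncard_coe_finset _
        _ ≤ ((Finset.Ico 1 r).image (fun k => j k - 1)).card + 1 := Finset.card_insert_le _ _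
        _ ≤ (Finset.Ico 1 r).card + 1 := by
            have := Finset.card_image_le (s := Finset.Ico 1 r) (f := fun k => j k - 1)
            omega
        _ = (r - 1) + 1 := by rw [Nat.card_Ico]
        _ = r := by omega
  · refine ⟨fun i => digit a N i, ?_, ?_, ?_⟩
    · intro i _
      have := Nat.mod_lt (N / a ^ i) ha0
      show N / a ^ i % a ≤ a - 1
      omega
    · exact hjrne
    · show N = (δ 0 - 1) * a ^ j 0 + ∑ i ∈ Finset.Ico (j r) (j 0), digit a N i * a ^ i
      have hdm := Nat.div_add_mod N (a ^ j 0)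
      rw [hdivj0] at hdm
      have hms := mod_pow_sum ha N (j 0)
      have hsub : Finset.Ico (j r) (j 0) ⊆ Finset.range (j 0) := by
        intro x hx
        simp only [Finset.mem_Ico] at hx
        simp only [Finset.mem_range]
        omega
      have hzero : ∀ x ∈ Finset.range (j 0), x ∉ Finset.Ico (j r) (j 0) →
          digit a N x * a ^ x = 0 := by
        intro x hx hnx
        simp only [Finset.mem_range] at hx
        simp only [Finset.mem_Ico, not_and, not_lt] at hnx
        have hxlt : x < j r := by omega
        rw [hlow x hxlt, zero_mul]
      have hsums := Finset.sum_subset hsub hzero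
      have hcomm : a ^ j 0 * (δ 0 - 1) = (δ 0 - 1) * a ^ j 0 := mul_comm _ _
      omega
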